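/- Under the absolute-continuity hypothesis, for every measurable cost c : Ω₀ × U₁ × U₂ → [0,∞] and every measurable γ₂ : Y₂ → U₂, the change-of-measure (static reduction) identity holds: ∫_Ω c(ω₀(ω), γ₁(y₁(ω)), γ₂(y₂(ω))) dP(ω) = ∫_{Ω₀×Y₁} ( ∫_{Y₂} c(ω₀, γ₁(y), γ₂(z)) · f(z, ω₀, γ₁(y), y) dQ(z) ) dν(ω₀, y), and this iterated integral equals the integral of (ω₀, y, z) ↦ c(ω₀, γ₁(y), γ₂(z)) · f(z, ω₀, γ₁(y), y) with respect to the product measure ν × Q. -/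
import Mathlib


open MeasureTheory ProbabilityTheory
open scoped ENNReal NNReal

/-- **Policy-independent static reduction (change of measure) identity.**
Under Witsenhausen's absolute-continuity hypothesis — the law of `(ω₀, y₁, y₂)` is the
composition of `ν` (the law of `(ω₀, y₁)`) with the kernel
`κ (ω₀, y) = Q.withDensity (z ↦ f (z, ω₀, γ₁ y, y))` — the expected cost under `P` equals the
iterated integral against `ν` and `Q` of the cost multiplied by the density `f`, and this
iterated integral equals the integral against the product measure `ν × Q`. -/
theorem policy_independent_static_reduction_change_of_measure
    {Ω Ω₀ Y₁ Y₂ U₁ U₂ : Type*}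
    [MeasurableSpace Ω] [MeasurableSpace Ω₀] [MeasurableSpace Y₁]
    [MeasurableSpace Y₂] [MeasurableSpace U₁] [MeasurableSpace U₂]
    (P : Measure Ω) [IsProbabilityMeasure P]
    (ω₀ : Ω → Ω₀) (y₁ : Ω → Y₁) (y₂ : Ω → Y₂)
    (hω₀ : Measurable ω₀) (hy₁ : Measurable y₁) (hy₂ : Measurable y₂)
    (γ₁ : Y₁ → U₁) (hγ₁ : Measurable γ₁)
    (Q : Measure Y₂) [IsProbabilityMeasure Q]
    (f : Y₂ × Ω₀ × U₁ × Y₁ → ℝ≥0) (hf : Measurable f)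
    (ν : Measure (Ω₀ × Y₁)) [SFinite ν]
    (hν : ν = P.map fun ω => (ω₀ ω, y₁ ω))
    (κ : Kernel (Ω₀ × Y₁) Y₂) [IsSFiniteKernel κ]
    (hκ : ∀ p : Ω₀ × Y₁,
      κ p = Q.withDensity fun z => (f (z, p.1, γ₁ p.2, p.2) : ℝ≥0∞))
    (habs : P.map (fun ω => ((ω₀ ω, y₁ ω), y₂ ω)) = ν ⊗ₘ κ)
    (c : Ω₀ × U₁ × U₂ → ℝ≥0∞) (hc : Measurable c)
    (γ₂ : Y₂ → U₂) (hγ₂ : Measurable γ₂) :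
    (∫⁻ ω, c (ω₀ ω, γ₁ (y₁ ω), γ₂ (y₂ ω)) ∂P
      = ∫⁻ p, ∫⁻ z, c (p.1, γ₁ p.2, γ₂ z)
          * (f (z, p.1, γ₁ p.2, p.2) : ℝ≥0∞) ∂Q ∂ν)
    ∧ (∫⁻ p, ∫⁻ z, c (p.1, γ₁ p.2, γ₂ z)
          * (f (z, p.1, γ₁ p.2, p.2) : ℝ≥0∞) ∂Q ∂ν
      = ∫⁻ q, c (q.1.1, γ₁ q.1.2, γ₂ q.2)
          * (f (q.2, q.1.1, γ₁ q.1.2, q.1.2) : ℝ≥0∞) ∂(ν.prod Q)) := by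
  have hmeas : Measurable fun q : (Ω₀ × Y₁) × Y₂ =>
      c (q.1.1, γ₁ q.1.2, γ₂ q.2) * (f (q.2, q.1.1, γ₁ q.1.2, q.1.2) : ℝ≥0∞) := by
    apply Measurable.mul
    · exact hc.comp (measurable_fst.fst.prodMk
        ((hγ₁.comp measurable_fst.snd).prodMk (hγ₂.comp measurable_snd)))
    · exact (measurable_coe_nnreal_ennreal.comp hf).comp
        (measurable_snd.prodMk (measurable_fst.fst.prodMk
          ((hγ₁.comp measurable_fst.snd).prodMk measurable_fst.snd)))
  have h1 : ∫⁻ ω, c (ω₀ ω, γ₁ (y₁ ω), γ₂ (y₂ ω)) ∂P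
      = ∫⁻ p, ∫⁻ z, c (p.1, γ₁ p.2, γ₂ z)
          * (f (z, p.1, γ₁ p.2, p.2) : ℝ≥0∞) ∂Q ∂ν := by
    have hg : Measurable fun q : (Ω₀ × Y₁) × Y₂ => c (q.1.1, γ₁ q.1.2, γ₂ q.2) :=
      hc.comp (measurable_fst.fst.prodMk
        ((hγ₁.comp measurable_fst.snd).prodMk (hγ₂.comp measurable_snd)))
    calc ∫⁻ ω, c (ω₀ ω, γ₁ (y₁ ω), γ₂ (y₂ ω)) ∂P
        = ∫⁻ q : (Ω₀ × Y₁) × Y₂, c (q.1.1, γ₁ q.1.2, γ₂ q.2)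
            ∂(P.map (fun ω => ((ω₀ ω, y₁ ω), y₂ ω))) := by
          rw [lintegral_map hg (((hω₀.prodMk hy₁)).prodMk hy₂)]
      _ = ∫⁻ p, ∫⁻ z, c (p.1, γ₁ p.2, γ₂ z) ∂(κ p) ∂ν := by
          rw [habs, Measure.lintegral_compProd hg]
      _ = ∫⁻ p, ∫⁻ z, c (p.1, γ₁ p.2, γ₂ z)
            * (f (z, p.1, γ₁ p.2, p.2) : ℝ≥0∞) ∂Q ∂ν := by
          refine lintegral_congr fun p => ?_
          rw [hκ p, lintegral_withDensity_eq_lintegral_mul _ ?_ ?_]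
          · simp [mul_comm]
          · exact (measurable_coe_nnreal_ennreal.comp hf).comp
              (measurable_id.prodMk measurable_const)
          · exact hc.comp (measurable_const.prodMk
              (measurable_const.prodMk hγ₂))
  exact ⟨h1, (lintegral_prod _ hmeas.aemeasurable).symm⟩
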